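/- Let T = k[u1, u2]/(u1 u2) with local ring at the origin having completed local ring k[[u1,u2]]/(u1u2). Every ideal I of k[[u1,u2]]/(u1u2) is either principal or of the form (u1^{a1}, u2^{a2}) for some positive integers a1, a2. -/

import Mathlib

noncomputable section NodeAux

open MvPowerSeries Finsupp

variable {k : Type} [Field k]

/-- Evaluation killing the other variable. -/
def nodeEv (s : Fin 2) : MvPowerSeries (Fin 2) k →+* PowerSeries k where
  toFun f := PowerSeries.mk fun n => MvPowerSeries.coeff (Finsupp.single s n) f
  map_one' := by
    ext n
    simp [PowerSeries.coeff_mk, MvPowerSeries.coeff_one, PowerSeries.coeff_one,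
      Finsupp.single_eq_zero]
  map_mul' f g := by
    ext n
    rw [PowerSeries.coeff_mk, PowerSeries.coeff_mul, MvPowerSeries.coeff_mul,
      Finsupp.antidiagonal_single, Finset.sum_map]
    simp [PowerSeries.coeff_mk]
  map_zero' := by ext n; simp [PowerSeries.coeff_mk]
  map_add' f g := by ext n; simp [PowerSeries.coeff_mk]

theorem nodeEv_coeff (s : Fin 2) (f : MvPowerSeries (Fin 2) k) (n : ℕ) :
    PowerSeries.coeff n (nodeEv s f) = MvPowerSeries.coeff (Finsupp.single s n) f := by
  exact PowerSeries.coeff_mk n fun m => MvPowerSeries.coeff (Finsupp.single s m) f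

theorem nodeEv_X_self (s : Fin 2) :
    nodeEv s (MvPowerSeries.X s : MvPowerSeries (Fin 2) k) = PowerSeries.X := by
  ext n
  rw [nodeEv_coeff, MvPowerSeries.coeff_X, PowerSeries.coeff_X]
  simp [(Finsupp.single_injective s).eq_iff]

theorem nodeEv_X_other {s t : Fin 2} (h : s ≠ t) :
    nodeEv s (MvPowerSeries.X t : MvPowerSeries (Fin 2) k) = 0 := by
  ext n
  rw [nodeEv_coeff, MvPowerSeries.coeff_X]
  rw [if_neg, map_zero]
  intro hc
  have := DFunLike.congr_fun hc t
  rw [Finsupp.single_apply, Finsupp.single_apply, if_neg h, if_pos rfl] at this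
  exact one_ne_zero this.symm

end NodeAux

section Chunk2
variable {k : Type} [Field k]

theorem fin2_finsupp_eq_single {d : Fin 2 →₀ ℕ} (h : d 1 = 0) :
    d = Finsupp.single 0 (d 0) := by
  ext t
  fin_cases t <;> simp [Finsupp.single_apply, h]

theorem fin2_finsupp_eq_single' {d : Fin 2 →₀ ℕ} (h : d 0 = 0) :
    d = Finsupp.single 1 (d 1) := by
  ext t
  fin_cases t <;> simp [Finsupp.single_apply, h]

theorem mem_nodeJ_of_ev_eq_zero {f : MvPowerSeries (Fin 2) k}
    (h0 : nodeEv 0 f = 0) (h1 : nodeEv 1 f = 0) :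
    f ∈ Ideal.span {(MvPowerSeries.X 0 : MvPowerSeries (Fin 2) k) * MvPowerSeries.X 1} := by
  rw [Ideal.mem_span_singleton]
  set m : Fin 2 →₀ ℕ := Finsupp.single 0 1 + Finsupp.single 1 1 with hm
  have hXX : (MvPowerSeries.X 0 : MvPowerSeries (Fin 2) k) * MvPowerSeries.X 1
      = MvPowerSeries.monomial m 1 := by
    rw [MvPowerSeries.X_def, MvPowerSeries.X_def, MvPowerSeries.monomial_mul_monomial, one_mul]
  refine ⟨(fun d => MvPowerSeries.coeff (d + m) f : MvPowerSeries (Fin 2) k), ?_⟩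
  ext d
  erw [hXX, MvPowerSeries.coeff_monomial_mul]
  by_cases hle : m ≤ d
  · rw [if_pos hle, one_mul]
    show f d = MvPowerSeries.coeff ((d - m) + m) f
    rw [tsub_add_cancel_of_le hle, MvPowerSeries.coeff_apply]
  · rw [if_neg hle]
    have : d 0 = 0 ∨ d 1 = 0 := by
      by_contra hc
      push_neg at hc
      refine hle (Finsupp.le_def.2 fun t => ?_)
      fin_cases t <;> simp [hm, Finsupp.single_apply] <;> omega
    rcases this with h | h
    · have hd := fin2_finsupp_eq_single' h
      have hh := nodeEv_coeff (k := k) 1 f (d 1)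
      rw [h1, map_zero] at hh
      rw [MvPowerSeries.coeff_apply] at hh ⊢
      rw [hd]; exact hh.symm
    · have hd := fin2_finsupp_eq_single h
      have hh := nodeEv_coeff (k := k) 0 f (d 0)
      rw [h0, map_zero] at hh
      rw [MvPowerSeries.coeff_apply] at hh ⊢
      rw [hd]; exact hh.symm

noncomputable def nodeUp (s : Fin 2) (p : PowerSeries k) : MvPowerSeries (Fin 2) k :=
  fun d => if d = Finsupp.single s (d s) then PowerSeries.coeff (d s) p else 0

theorem nodeEv_nodeUp_self (s : Fin 2) (p : PowerSeries k) :
    nodeEv s (nodeUp s p) = p := by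
  ext n
  rw [nodeEv_coeff, MvPowerSeries.coeff_apply, nodeUp]
  simp [Finsupp.single_apply]

theorem nodeEv_nodeUp_other {s t : Fin 2} (h : t ≠ s) (p : PowerSeries k) :
    nodeEv t (nodeUp s p) = PowerSeries.C (PowerSeries.constantCoeff p) := by
  ext n
  rw [nodeEv_coeff, MvPowerSeries.coeff_apply, nodeUp]
  simp [Finsupp.single_apply, h, PowerSeries.coeff_C, Finsupp.single_eq_zero]

end Chunk2

section Chunk3
variable {k : Type} [Field k]

abbrev NodeR (k : Type) [Field k] :=
  MvPowerSeries (Fin 2) k ⧸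
    Ideal.span {(MvPowerSeries.X 0 : MvPowerSeries (Fin 2) k) * MvPowerSeries.X 1}

theorem nodeEv_XX (s : Fin 2) :
    nodeEv s ((MvPowerSeries.X 0 : MvPowerSeries (Fin 2) k) * MvPowerSeries.X 1) = 0 := by
  rw [map_mul]
  by_cases h : s = 0
  · subst h
    rw [nodeEv_X_other (by decide : (0 : Fin 2) ≠ 1), mul_zero]
  · have h1 : s = 1 := by omega
    subst h1
    rw [nodeEv_X_other (by decide : (1 : Fin 2) ≠ 0), zero_mul]

noncomputable def nodeRho (s : Fin 2) : NodeR k →+* PowerSeries k :=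
  Ideal.Quotient.lift _ (nodeEv s) (by
    intro a ha
    rw [Ideal.mem_span_singleton] at ha
    obtain ⟨b, rfl⟩ := ha
    rw [map_mul, nodeEv_XX, zero_mul])


end Chunk3


noncomputable section Chunk3b
variable {k : Type} [Field k]

def nodeMk : MvPowerSeries (Fin 2) k →+* NodeR k :=
  Ideal.Quotient.mk (Ideal.span {(MvPowerSeries.X 0 : MvPowerSeries (Fin 2) k) * MvPowerSeries.X 1})

@[simp] theorem nodeRho_mk (s : Fin 2) (f : MvPowerSeries (Fin 2) k) :
    nodeRho s (nodeMk f) = nodeEv s f :=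
  Ideal.Quotient.lift_mk _ _ _

theorem nodeMk_surjective : Function.Surjective (nodeMk (k := k)) :=
  Ideal.Quotient.mk_surjective

theorem nodeR_ext {z w : NodeR k} (h0 : nodeRho 0 z = nodeRho 0 w)
    (h1 : nodeRho 1 z = nodeRho 1 w) : z = w := by
  obtain ⟨f, rfl⟩ := nodeMk_surjective z
  obtain ⟨g, rfl⟩ := nodeMk_surjective w
  rw [nodeRho_mk, nodeRho_mk] at h0 h1
  rw [nodeMk, Ideal.Quotient.mk_eq_mk_iff_sub_mem]
  exact mem_nodeJ_of_ev_eq_zero (by rw [map_sub, h0, sub_self])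
    (by rw [map_sub, h1, sub_self])

theorem nodeConst_eq (z : NodeR k) :
    PowerSeries.constantCoeff (nodeRho 0 z) = PowerSeries.constantCoeff (nodeRho 1 z) := by
  obtain ⟨f, rfl⟩ := nodeMk_surjective z
  rw [nodeRho_mk, nodeRho_mk, ← PowerSeries.coeff_zero_eq_constantCoeff_apply,
    ← PowerSeries.coeff_zero_eq_constantCoeff_apply, nodeEv_coeff, nodeEv_coeff,
    Finsupp.single_zero, Finsupp.single_zero]

def nodeLift (s : Fin 2) (p : PowerSeries k) : NodeR k := nodeMk (nodeUp s p)

@[simp] theorem nodeRho_nodeLift_self (s : Fin 2) (p : PowerSeries k) :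
    nodeRho s (nodeLift s p) = p := by
  rw [nodeLift, nodeRho_mk, nodeEv_nodeUp_self]

theorem nodeRho_nodeLift_other {s t : Fin 2} (h : t ≠ s) (p : PowerSeries k) :
    nodeRho t (nodeLift s p) = PowerSeries.C (PowerSeries.constantCoeff p) := by
  rw [nodeLift, nodeRho_mk, nodeEv_nodeUp_other h]

/-- combined lift of a compatible pair -/
def nodePair (p q : PowerSeries k) : NodeR k :=
  nodeLift 0 p + nodeLift 1 q - nodeLift 1 (PowerSeries.C (PowerSeries.constantCoeff p))

theorem nodeRho_nodePair_0 (p q : PowerSeries k) :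
    nodeRho 0 (nodePair p q) = p + PowerSeries.C (PowerSeries.constantCoeff q)
      - PowerSeries.C (PowerSeries.constantCoeff p) := by
  rw [nodePair, map_sub, map_add, nodeRho_nodeLift_self,
    nodeRho_nodeLift_other (by decide : (0:Fin 2) ≠ 1),
    nodeRho_nodeLift_other (by decide : (0:Fin 2) ≠ 1)]
  simp

theorem nodeRho_nodePair_1 (p q : PowerSeries k) :
    nodeRho 1 (nodePair p q) = q := by
  rw [nodePair, map_sub, map_add, nodeRho_nodeLift_self,
    nodeRho_nodeLift_other (by decide : (1:Fin 2) ≠ 0), nodeRho_nodeLift_self]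
  simp

end Chunk3b


noncomputable section Chunk4
variable {k : Type} [Field k]

theorem nodeRho_surjective (s : Fin 2) : Function.Surjective (nodeRho (k := k) s) :=
  fun p => ⟨nodeLift s p, nodeRho_nodeLift_self s p⟩

theorem nodeRho_X_pow_self (s : Fin 2) (a : ℕ) :
    nodeRho s ((nodeMk (MvPowerSeries.X s : MvPowerSeries (Fin 2) k)) ^ a)
      = PowerSeries.X ^ a := by
  rw [map_pow, nodeRho_mk, nodeEv_X_self]

theorem nodeRho_X_pow_other {s t : Fin 2} (h : s ≠ t) {a : ℕ} (ha : a ≠ 0) :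
    nodeRho s ((nodeMk (MvPowerSeries.X t : MvPowerSeries (Fin 2) k)) ^ a) = 0 := by
  rw [map_pow, nodeRho_mk, nodeEv_X_other h, zero_pow ha]

theorem nodeRho_nodePair_0' {p q : PowerSeries k}
    (h : PowerSeries.constantCoeff p = PowerSeries.constantCoeff q) :
    nodeRho 0 (nodePair p q) = p := by
  rw [nodeRho_nodePair_0, h]
  ring

theorem nodeIsUnit {z : NodeR k}
    (h : PowerSeries.constantCoeff (nodeRho 0 z) ≠ 0) : IsUnit z := by
  have hq := nodeConst_eq z
  obtain ⟨u, hu⟩ := PowerSeries.isUnit_iff_constantCoeff.mpr (isUnit_iff_ne_zero.mpr h)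
  obtain ⟨v, hv⟩ := PowerSeries.isUnit_iff_constantCoeff.mpr (isUnit_iff_ne_zero.mpr (hq ▸ h))
  set p' : PowerSeries k := ↑u⁻¹ with hp'
  set q' : PowerSeries k := ↑v⁻¹ with hq'
  have hup : nodeRho 0 z * p' = 1 := by rw [← hu, hp']; exact u.mul_inv
  have hvq : nodeRho 1 z * q' = 1 := by rw [← hv, hq']; exact v.mul_inv
  have hcc : PowerSeries.constantCoeff p' = PowerSeries.constantCoeff q' := by
    have h1 : PowerSeries.constantCoeff (nodeRho 0 z) * PowerSeries.constantCoeff p' = 1 := by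
      rw [← map_mul, hup, map_one]
    have h2 : PowerSeries.constantCoeff (nodeRho 0 z) * PowerSeries.constantCoeff q' = 1 := by
      rw [hq, ← map_mul, hvq, map_one]
    exact mul_left_cancel₀ h (h1.trans h2.symm)
  apply IsUnit.of_mul_eq_one (a := z) (nodePair p' q')
  apply nodeR_ext
  · rw [map_mul, nodeRho_nodePair_0' hcc, map_one, hup]
  · rw [map_mul, nodeRho_nodePair_1, map_one, hvq]

end Chunk4


noncomputable section Chunk5
variable {k : Type} [Field k]

/-- If `I` contains an element supported on the second branch with unit cofactor,
then it contains `x₁^a`. -/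
theorem x1pow_mem {I : Ideal (NodeR k)} {w : NodeR k} (hw : w ∈ I)
    (h0 : nodeRho 0 w = 0) {e : PowerSeries k} {a : ℕ} (ha : a ≠ 0)
    (h1 : nodeRho 1 w = e * PowerSeries.X ^ a)
    (he : PowerSeries.constantCoeff e ≠ 0) :
    (nodeMk (MvPowerSeries.X 1 : MvPowerSeries (Fin 2) k)) ^ a ∈ I := by
  obtain ⟨u, hu⟩ := PowerSeries.isUnit_iff_constantCoeff.mpr (isUnit_iff_ne_zero.mpr he)
  have key : nodeLift 1 (↑u⁻¹) * w = (nodeMk (MvPowerSeries.X 1 : MvPowerSeries (Fin 2) k)) ^ a := by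
    apply nodeR_ext
    · rw [map_mul, h0, mul_zero, nodeRho_X_pow_other (by decide : (0:Fin 2) ≠ 1) ha]
    · rw [map_mul, nodeRho_nodeLift_self, h1, nodeRho_X_pow_self, ← mul_assoc, ← hu,
        Units.inv_mul, one_mul]
  rw [← key]
  exact Ideal.mul_mem_left I _ hw

theorem x0pow_mem {I : Ideal (NodeR k)} {w : NodeR k} (hw : w ∈ I)
    (h1 : nodeRho 1 w = 0) {e : PowerSeries k} {a : ℕ} (ha : a ≠ 0)
    (h0 : nodeRho 0 w = e * PowerSeries.X ^ a)
    (he : PowerSeries.constantCoeff e ≠ 0) :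
    (nodeMk (MvPowerSeries.X 0 : MvPowerSeries (Fin 2) k)) ^ a ∈ I := by
  obtain ⟨u, hu⟩ := PowerSeries.isUnit_iff_constantCoeff.mpr (isUnit_iff_ne_zero.mpr he)
  have key : nodeLift 0 (↑u⁻¹) * w = (nodeMk (MvPowerSeries.X 0 : MvPowerSeries (Fin 2) k)) ^ a := by
    apply nodeR_ext
    · rw [map_mul, nodeRho_nodeLift_self, h0, nodeRho_X_pow_self, ← mul_assoc, ← hu,
        Units.inv_mul, one_mul]
    · rw [map_mul, h1, mul_zero, nodeRho_X_pow_other (by decide : (1:Fin 2) ≠ 0) ha]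
  rw [← key]
  exact Ideal.mul_mem_left I _ hw

/-- If the first projection of everything in `I` vanishes, `I` is principal. -/
theorem principal_of_rho0_eq_zero {I : Ideal (NodeR k)}
    (h : ∀ z ∈ I, nodeRho 0 z = 0) : ∃ f, I = Ideal.span {f} := by
  obtain ⟨q0, hq0⟩ := (IsPrincipalIdealRing.principal (I.map (nodeRho 1))).principal
  have hq0mem : q0 ∈ I.map (nodeRho 1) := by rw [hq0]; exact Ideal.subset_span rfl
  obtain ⟨z0, hz0I, hz0⟩ := (Ideal.mem_map_iff_of_surjective _ (nodeRho_surjective (k := k) 1)).mp hq0mem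
  refine ⟨z0, le_antisymm ?_ ?_⟩
  · intro z hz
    have h1 : nodeRho 1 z ∈ I.map (nodeRho 1) := Ideal.mem_map_of_mem _ hz
    rw [hq0] at h1
    obtain ⟨r, hr⟩ := Ideal.mem_span_singleton'.mp h1
    rw [Ideal.mem_span_singleton']
    refine ⟨nodeLift 1 r, nodeR_ext ?_ ?_⟩
    · rw [map_mul, h z0 hz0I, mul_zero, h z hz]
    · rw [map_mul, nodeRho_nodeLift_self, hz0, hr]
  · rw [Ideal.span_le, Set.singleton_subset_iff]
    exact hz0I

theorem principal_of_rho1_eq_zero {I : Ideal (NodeR k)}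
    (h : ∀ z ∈ I, nodeRho 1 z = 0) : ∃ f, I = Ideal.span {f} := by
  obtain ⟨q0, hq0⟩ := (IsPrincipalIdealRing.principal (I.map (nodeRho 0))).principal
  have hq0mem : q0 ∈ I.map (nodeRho 0) := by rw [hq0]; exact Ideal.subset_span rfl
  obtain ⟨z0, hz0I, hz0⟩ := (Ideal.mem_map_iff_of_surjective _ (nodeRho_surjective (k := k) 0)).mp hq0mem
  refine ⟨z0, le_antisymm ?_ ?_⟩
  · intro z hz
    have h1 : nodeRho 0 z ∈ I.map (nodeRho 0) := Ideal.mem_map_of_mem _ hz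
    rw [hq0] at h1
    obtain ⟨r, hr⟩ := Ideal.mem_span_singleton'.mp h1
    rw [Ideal.mem_span_singleton']
    refine ⟨nodeLift 0 r, nodeR_ext ?_ ?_⟩
    · rw [map_mul, nodeRho_nodeLift_self, hz0, hr]
    · rw [map_mul, h z0 hz0I, mul_zero, h z hz]
  · rw [Ideal.span_le, Set.singleton_subset_iff]
    exact hz0I

end Chunk5



set_option maxHeartbeats 1600000
set_option synthInstance.maxHeartbeats 800000

/-- Every ideal of `k[[u₁,u₂]]/(u₁u₂)` (the completed local ring of the node) is either
principal or of the form `(u₁^{a₁}, u₂^{a₂})` with `a₁, a₂ > 0`. -/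
theorem ideal_of_node_ring_principal_or_two_generated
    (k : Type) [Field k]
    (I : Ideal (MvPowerSeries (Fin 2) k ⧸
        Ideal.span {(MvPowerSeries.X 0 : MvPowerSeries (Fin 2) k) * MvPowerSeries.X 1})) :
    (∃ f, I = Ideal.span {f}) ∨
      ∃ a₁ a₂ : ℕ, 0 < a₁ ∧ 0 < a₂ ∧
        I = Ideal.span
            {(Ideal.Quotient.mk _ (MvPowerSeries.X 0 : MvPowerSeries (Fin 2) k)) ^ a₁,
             (Ideal.Quotient.mk _ (MvPowerSeries.X 1 : MvPowerSeries (Fin 2) k)) ^ a₂} := by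
  by_cases hU : ∃ z ∈ I, IsUnit z
  · obtain ⟨z, hzI, hz⟩ := hU
    exact Or.inl ⟨1, by rw [Ideal.span_singleton_one, Ideal.eq_top_of_isUnit_mem I hzI hz]⟩
  push_neg at hU
  have hconst0 : ∀ z ∈ I, PowerSeries.constantCoeff (nodeRho 0 z) = 0 := by
    intro z hz
    by_contra hc
    exact hU z hz (nodeIsUnit hc)
  by_cases h0all : ∀ z ∈ I, nodeRho 0 z = 0
  · exact Or.inl (principal_of_rho0_eq_zero h0all)
  by_cases h1all : ∀ z ∈ I, nodeRho 1 z = 0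
  · exact Or.inl (principal_of_rho1_eq_zero h1all)
  push_neg at h0all h1all
  have hI1 : I.map (nodeRho 0) ≠ ⊥ := by
    obtain ⟨z, hz, hz0⟩ := h0all
    intro hb
    have := Ideal.mem_map_of_mem (nodeRho 0) hz
    rw [hb, Ideal.mem_bot] at this
    exact hz0 this
  have hI2 : I.map (nodeRho 1) ≠ ⊥ := by
    obtain ⟨z, hz, hz0⟩ := h1all
    intro hb
    have := Ideal.mem_map_of_mem (nodeRho 1) hz
    rw [hb, Ideal.mem_bot] at this
    exact hz0 this
  obtain ⟨a1, ha1⟩ :=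
    IsDiscreteValuationRing.ideal_eq_span_pow_irreducible hI1 PowerSeries.X_irreducible
  obtain ⟨a2, ha2⟩ :=
    IsDiscreteValuationRing.ideal_eq_span_pow_irreducible hI2 PowerSeries.X_irreducible
  have hrep0 : ∀ z ∈ I, ∃ r, nodeRho 0 z = r * PowerSeries.X ^ a1 := by
    intro z hz
    have h := Ideal.mem_map_of_mem (nodeRho 0) hz
    rw [ha1] at h
    obtain ⟨r, hr⟩ := Ideal.mem_span_singleton'.mp h
    exact ⟨r, hr.symm⟩
  have hrep1 : ∀ z ∈ I, ∃ r, nodeRho 1 z = r * PowerSeries.X ^ a2 := by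
    intro z hz
    have h := Ideal.mem_map_of_mem (nodeRho 1) hz
    rw [ha2] at h
    obtain ⟨r, hr⟩ := Ideal.mem_span_singleton'.mp h
    exact ⟨r, hr.symm⟩
  have ha1pos : 0 < a1 := by
    rcases Nat.eq_zero_or_pos a1 with h | h
    · exfalso
      have h1m : (1 : PowerSeries k) ∈ I.map (nodeRho 0) := by
        rw [ha1, h, pow_zero]; exact Ideal.subset_span rfl
      obtain ⟨z, hz, hz1⟩ :=
        (Ideal.mem_map_iff_of_surjective _ (nodeRho_surjective (k := k) 0)).mp h1m
      have hc := hconst0 z hz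
      rw [hz1, map_one] at hc
      exact one_ne_zero hc
    · exact h
  have ha2pos : 0 < a2 := by
    rcases Nat.eq_zero_or_pos a2 with h | h
    · exfalso
      have h1m : (1 : PowerSeries k) ∈ I.map (nodeRho 1) := by
        rw [ha2, h, pow_zero]; exact Ideal.subset_span rfl
      obtain ⟨z, hz, hz1⟩ :=
        (Ideal.mem_map_iff_of_surjective _ (nodeRho_surjective (k := k) 1)).mp h1m
      have hc := hconst0 z hz
      rw [nodeConst_eq, hz1, map_one] at hc
      exact one_ne_zero hc
    · exact h
  have hX1 : PowerSeries.X ^ a1 ∈ I.map (nodeRho 0) := by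
    rw [ha1]; exact Ideal.subset_span rfl
  obtain ⟨z1, hz1I, hz1⟩ := (Ideal.mem_map_iff_of_surjective _ (nodeRho_surjective (k := k) 0)).mp hX1
  have hX2 : PowerSeries.X ^ a2 ∈ I.map (nodeRho 1) := by
    rw [ha2]; exact Ideal.subset_span rfl
  obtain ⟨z2, hz2I, hz2⟩ := (Ideal.mem_map_iff_of_surjective _ (nodeRho_surjective (k := k) 1)).mp hX2
  obtain ⟨t, ht⟩ := hrep1 z1 hz1I
  obtain ⟨r, hr⟩ := hrep0 z2 hz2I
  set x0 : NodeR k := nodeMk (MvPowerSeries.X 0) with hx0def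
  set x1 : NodeR k := nodeMk (MvPowerSeries.X 1) with hx1def
  by_cases hmem : x0 ^ a1 ∈ I ∧ x1 ^ a2 ∈ I
  · right
    refine ⟨a1, a2, ha1pos, ha2pos, ?_⟩
    show I = Ideal.span {x0 ^ a1, x1 ^ a2}
    apply le_antisymm
    · intro z hz
      obtain ⟨r', hr'⟩ := hrep0 z hz
      obtain ⟨s', hs'⟩ := hrep1 z hz
      rw [Ideal.mem_span_pair]
      refine ⟨nodeLift 0 r', nodeLift 1 s', nodeR_ext ?_ ?_⟩
      · rw [map_add, map_mul, map_mul, nodeRho_nodeLift_self, nodeRho_X_pow_self,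
          nodeRho_X_pow_other (by decide : (0:Fin 2) ≠ 1) ha2pos.ne', mul_zero, add_zero, hr']
      · rw [map_add, map_mul, map_mul, nodeRho_nodeLift_self, nodeRho_X_pow_self,
          nodeRho_X_pow_other (by decide : (1:Fin 2) ≠ 0) ha1pos.ne', mul_zero, zero_add, hs']
    · rw [Ideal.span_le, Set.insert_subset_iff, Set.singleton_subset_iff]
      exact ⟨hmem.1, hmem.2⟩
  · left
    have iff01 : (x0 ^ a1 ∈ I) ↔ (x1 ^ a2 ∈ I) := by
      constructor
      · intro hx0m
        have hwI : z2 - nodeLift 0 r * x0 ^ a1 ∈ I :=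
          I.sub_mem hz2I (Ideal.mul_mem_left _ _ hx0m)
        refine x1pow_mem hwI ?_ ha2pos.ne' (e := 1) ?_ (by simp)
        · rw [map_sub, map_mul, nodeRho_nodeLift_self, nodeRho_X_pow_self, hr, sub_self]
        · rw [map_sub, map_mul, nodeRho_X_pow_other (by decide : (1:Fin 2) ≠ 0) ha1pos.ne',
            mul_zero, sub_zero, hz2, one_mul]
      · intro hx1m
        have hwI : z1 - nodeLift 1 t * x1 ^ a2 ∈ I :=
          I.sub_mem hz1I (Ideal.mul_mem_left _ _ hx1m)
        refine x0pow_mem hwI ?_ ha1pos.ne' (e := 1) ?_ (by simp)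
        · rw [map_sub, map_mul, nodeRho_nodeLift_self, nodeRho_X_pow_self, ht, sub_self]
        · rw [map_sub, map_mul, nodeRho_X_pow_other (by decide : (0:Fin 2) ≠ 1) ha2pos.ne',
            mul_zero, sub_zero, hz1, one_mul]
    have hx1n : x1 ^ a2 ∉ I := fun h => hmem ⟨iff01.mpr h, h⟩
    have huI : z2 - nodeLift 0 r * z1 ∈ I := I.sub_mem hz2I (Ideal.mul_mem_left _ _ hz1I)
    have hu0 : nodeRho 0 (z2 - nodeLift 0 r * z1) = 0 := by
      rw [map_sub, map_mul, nodeRho_nodeLift_self, hz1, hr, sub_self]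
    have hu1 : nodeRho 1 (z2 - nodeLift 0 r * z1) =
        (1 - PowerSeries.C (PowerSeries.constantCoeff r) * t) * PowerSeries.X ^ a2 := by
      rw [map_sub, map_mul, nodeRho_nodeLift_other (by decide : (1:Fin 2) ≠ 0), hz2, ht]
      ring
    have hct : PowerSeries.constantCoeff r * PowerSeries.constantCoeff t = 1 := by
      by_contra hc
      apply hx1n
      refine x1pow_mem huI hu0 ha2pos.ne' hu1 ?_
      simp only [map_sub, map_one, map_mul, PowerSeries.constantCoeff_C]
      intro h'
      exact hc (sub_eq_zero.mp h').symm
    have htne : PowerSeries.constantCoeff t ≠ 0 := by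
      intro h
      rw [h, mul_zero] at hct
      exact zero_ne_one hct
    obtain ⟨tu, htu'⟩ := PowerSeries.isUnit_iff_constantCoeff.mpr (isUnit_iff_ne_zero.mpr htne)
    set t' : PowerSeries k := ↑tu⁻¹ with ht'def
    have htt' : t * t' = 1 := by rw [← htu', ht'def]; exact tu.mul_inv
    have hconstt' : PowerSeries.constantCoeff t * PowerSeries.constantCoeff t' = 1 := by
      rw [← map_mul, htt', map_one]
    refine ⟨z1, le_antisymm ?_ (by rw [Ideal.span_le, Set.singleton_subset_iff]; exact hz1I)⟩
    intro z hz
    obtain ⟨r', hr'⟩ := hrep0 z hz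
    obtain ⟨s', hs'⟩ := hrep1 z hz
    have huI' : z - nodeLift 0 r' * z1 ∈ I := I.sub_mem hz (Ideal.mul_mem_left _ _ hz1I)
    have hu0' : nodeRho 0 (z - nodeLift 0 r' * z1) = 0 := by
      rw [map_sub, map_mul, nodeRho_nodeLift_self, hz1, hr', sub_self]
    have hu1' : nodeRho 1 (z - nodeLift 0 r' * z1) =
        (s' - PowerSeries.C (PowerSeries.constantCoeff r') * t) * PowerSeries.X ^ a2 := by
      rw [map_sub, map_mul, nodeRho_nodeLift_other (by decide : (1:Fin 2) ≠ 0), hs', ht]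
      ring
    have hcs : PowerSeries.constantCoeff s'
        = PowerSeries.constantCoeff r' * PowerSeries.constantCoeff t := by
      by_contra hc
      apply hx1n
      refine x1pow_mem huI' hu0' ha2pos.ne' hu1' ?_
      simp only [map_sub, map_mul, PowerSeries.constantCoeff_C]
      intro h'
      exact hc (sub_eq_zero.mp h')
    have hcpair : PowerSeries.constantCoeff r' = PowerSeries.constantCoeff (s' * t') := by
      rw [map_mul, hcs, mul_assoc, hconstt', mul_one]
    rw [Ideal.mem_span_singleton']
    refine ⟨nodePair r' (s' * t'), nodeR_ext ?_ ?_⟩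
    · rw [map_mul, nodeRho_nodePair_0' hcpair, hz1, hr']
    · rw [map_mul, nodeRho_nodePair_1, ht, hs']
      have hcalc : s' * t' * (t * PowerSeries.X ^ a2) = s' * (t * t') * PowerSeries.X ^ a2 := by
        ring
      rw [hcalc, htt', mul_one]
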